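/- arXiv:2009.01899 — 2 statements merged into one kernel-verified Lean document; each statement's English description precedes it below -/
import Mathlib

section
/- Let C be a coherent group and let A be a finitely generated abelian group. Then the direct product C × A is coherent. -/
namespace PaperBase

/-- A group is finitely presented. -/
def IsFinitelyPresentedGroup (G : Type*) [Group G] : Prop :=
  ∃ (n : ℕ) (rels : Set (FreeGroup (Fin n))), rels.Finite ∧
    Nonempty (PresentedGroup rels ≃* G)

/-- A group is coherent if every finitely generated subgroup is finitely presented. -/
def IsCoherentGroup (G : Type*) [Group G] : Prop :=
  ∀ H : Subgroup G, H.FG → IsFinitelyPresentedGroup H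


lemma fp_congr {G G' : Type*} [Group G] [Group G'] (e : G ≃* G')
    (h : IsFinitelyPresentedGroup G) : IsFinitelyPresentedGroup G' := by
  obtain ⟨n, rels, hf, ⟨e'⟩⟩ := h
  exact ⟨n, rels, hf, ⟨e'.trans e⟩⟩

lemma fp_of_surjective {G : Type*} [Group G] {ι : Type*} [Finite ι]
    (f : FreeGroup ι →* G) (hf : Function.Surjective f) (T : Set (FreeGroup ι))
    (hT : T.Finite) (hker : f.ker = Subgroup.normalClosure T) :
    IsFinitelyPresentedGroup G := by
  obtain ⟨n, ⟨e⟩⟩ := Finite.exists_equiv_fin ι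
  set ε := FreeGroup.freeGroupCongr e with hε
  refine ⟨n, ε '' T, hT.image _, ⟨?_⟩⟩
  have hmap : (Subgroup.normalClosure T).map ε.toMonoidHom
      = Subgroup.normalClosure (ε '' T) :=
    Subgroup.map_normalClosure T ε.toMonoidHom ε.surjective
  exact ((QuotientGroup.congr (Subgroup.normalClosure T)
      (Subgroup.normalClosure (ε '' T)) ε hmap).symm.trans
    ((QuotientGroup.quotientMulEquivOfEq hker.symm).trans
      (QuotientGroup.quotientKerEquivOfSurjective f hf)))

lemma fp_data {G : Type*} [Group G] (h : IsFinitelyPresentedGroup G) :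
    ∃ (n : ℕ) (f : FreeGroup (Fin n) →* G), Function.Surjective f ∧
      ∃ T : Set (FreeGroup (Fin n)), T.Finite ∧
        f.ker = Subgroup.normalClosure T := by
  obtain ⟨n, rels, hfin, ⟨e⟩⟩ := h
  refine ⟨n, e.toMonoidHom.comp (PresentedGroup.mk rels),
    e.surjective.comp (PresentedGroup.mk_surjective rels), rels, hfin, ?_⟩
  ext w
  simp only [MonoidHom.mem_ker, MonoidHom.comp_apply, MulEquiv.coe_toMonoidHom]
  rw [show (1 : G) = e 1 by simp, e.apply_eq_iff_eq]
  exact QuotientGroup.eq_one_iff w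

/-- conjugation stability from generators -/
lemma conj_mem_closure_of_gen {G : Type*} [Group G] (S : Set G) (z : G)
    (h : ∀ s ∈ S, z * s * z⁻¹ ∈ Subgroup.closure S) :
    ∀ p ∈ Subgroup.closure S, z * p * z⁻¹ ∈ Subgroup.closure S := by
  intro p hp
  have hm : Subgroup.map (MulAut.conj z).toMonoidHom (Subgroup.closure S)
      ≤ Subgroup.closure S := by
    rw [MonoidHom.map_closure, Subgroup.closure_le]
    rintro _ ⟨s, hs, rfl⟩
    simpa using h s hs
  have : (MulAut.conj z) p ∈ Subgroup.map (MulAut.conj z).toMonoidHom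
      (Subgroup.closure S) := ⟨p, hp, rfl⟩
  simpa using hm this


lemma fp_of_normal {H : Type*} [Group H] (N : Subgroup H) [hNn : N.Normal]
    (h1 : IsFinitelyPresentedGroup N) (h2 : IsFinitelyPresentedGroup (H ⧸ N)) :
    IsFinitelyPresentedGroup H := by
  classical
  obtain ⟨n, fQ, hfQ, RQ, hRQfin, hkerQ⟩ := fp_data h2
  obtain ⟨m, fN, hfN, RN, hRNfin, hkerN⟩ := fp_data h1
  set π : H →* H ⧸ N := QuotientGroup.mk' N with hπ
  set g : (Fin n ⊕ Fin m) → H :=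
    Sum.elim (fun i => (fQ (FreeGroup.of i)).out) (fun j => ((fN (FreeGroup.of j) : N) : H))
    with hg
  set φ : FreeGroup (Fin n ⊕ Fin m) →* H := FreeGroup.lift g with hφ
  set ιx : FreeGroup (Fin n) →* FreeGroup (Fin n ⊕ Fin m) :=
    FreeGroup.lift (fun i => FreeGroup.of (Sum.inl i)) with hιx
  set ιy : FreeGroup (Fin m) →* FreeGroup (Fin n ⊕ Fin m) :=
    FreeGroup.lift (fun j => FreeGroup.of (Sum.inr j)) with hιy
  have hπx : ∀ u, π (φ (ιx u)) = fQ u := by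
    have h : (π.comp φ).comp ιx = fQ := by
      ext i
      simp [hπ, hφ, hιx, hg]
    intro u
    calc π (φ (ιx u)) = ((π.comp φ).comp ιx) u := rfl
    _ = fQ u := by rw [h]
  have hφy : ∀ v, φ (ιy v) = ((fN v : N) : H) := by
    have h : φ.comp ιy = N.subtype.comp fN := by
      ext j
      simp [hφ, hιy, hg]
    intro v
    calc φ (ιy v) = (φ.comp ιy) v := rfl
    _ = ((fN v : N) : H) := by rw [h]; rfl
  have hφx_memN : ∀ r ∈ RQ, φ (ιx r) ∈ N := by
    intro r hr
    have hr0 : r ∈ fQ.ker := by rw [hkerQ]; exact Subgroup.subset_normalClosure hr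
    have hr1 : fQ r = 1 := hr0
    have h2 : π (φ (ιx r)) = 1 := by rw [hπx, hr1]
    exact (QuotientGroup.eq_one_iff _).mp h2
  have hwN : ∀ x : N, ∃ v : FreeGroup (Fin m), fN v = x := fun x => hfN x
  choose wN hwN using hwN
  set nr : FreeGroup (Fin n) → N :=
    fun r => if h : φ (ιx r) ∈ N then ⟨φ (ιx r), h⟩ else 1 with hnr
  have hnr_eq : ∀ r ∈ RQ, ((nr r : N) : H) = φ (ιx r) := by
    intro r hr
    rw [hnr]
    simp only [dif_pos (hφx_memN r hr)]
  set cN : Fin n → Fin m → Bool → N := fun i j b =>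
    ⟨(cond b (g (Sum.inl i)) (g (Sum.inl i))⁻¹) * ((fN (FreeGroup.of j) : N) : H) *
      (cond b (g (Sum.inl i)) (g (Sum.inl i))⁻¹)⁻¹, by
        cases b <;> exact hNn.conj_mem _ (fN (FreeGroup.of j)).2 _⟩ with hcN
  set rel1 : FreeGroup (Fin n) → FreeGroup (Fin n ⊕ Fin m) :=
    fun r => ιx r * (ιy (wN (nr r)))⁻¹ with hrel1
  set rel2 : Fin n × Fin m × Bool → FreeGroup (Fin n ⊕ Fin m) := fun t =>
    (cond t.2.2 (FreeGroup.of (Sum.inl t.1)) (FreeGroup.of (Sum.inl t.1))⁻¹) *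
      FreeGroup.of (Sum.inr t.2.1) *
      (cond t.2.2 (FreeGroup.of (Sum.inl t.1)) (FreeGroup.of (Sum.inl t.1))⁻¹)⁻¹ *
      (ιy (wN (cN t.1 t.2.1 t.2.2)))⁻¹ with hrel2
  set R : Set (FreeGroup (Fin n ⊕ Fin m)) :=
    (rel1 '' RQ ∪ Set.range rel2) ∪ (ιy '' RN) with hR
  have hRfin : R.Finite :=
    ((hRQfin.image _).union (Set.finite_range _)).union (hRNfin.image _)
  have hφx_of : ∀ i, φ (FreeGroup.of (Sum.inl i)) = g (Sum.inl i) := by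
    intro i; simp [hφ]
  have hrel_ker : ∀ w ∈ R, φ w = 1 := by
    rintro w ((hw | hw) | hw)
    · obtain ⟨r, hr, rfl⟩ := hw
      have h1 : φ (ιy (wN (nr r))) = φ (ιx r) := by
        rw [hφy, hwN, hnr_eq r hr]
      rw [hrel1]
      simp only [map_mul, map_inv, h1, mul_inv_cancel]
    · obtain ⟨⟨i, j, b⟩, rfl⟩ := hw
      have h1 : φ (ιy (wN (cN i j b))) = ((cN i j b : N) : H) := by rw [hφy, hwN]
      have h2 : φ (cond b (FreeGroup.of (Sum.inl i)) (FreeGroup.of (Sum.inl i))⁻¹)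
          = cond b (g (Sum.inl i)) (g (Sum.inl i))⁻¹ := by
        cases b <;> simp [hφx_of]
      have h3 : φ (FreeGroup.of (Sum.inr j)) = ((fN (FreeGroup.of j) : N) : H) := by
        simp [hφ, hg]
      have h4 : ((cN i j b : N) : H) =
          (cond b (g (Sum.inl i)) (g (Sum.inl i))⁻¹) * ((fN (FreeGroup.of j) : N) : H) *
          (cond b (g (Sum.inl i)) (g (Sum.inl i))⁻¹)⁻¹ := by rw [hcN]
      show φ ((cond b (FreeGroup.of (Sum.inl i)) (FreeGroup.of (Sum.inl i))⁻¹) *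
        FreeGroup.of (Sum.inr j) *
        (cond b (FreeGroup.of (Sum.inl i)) (FreeGroup.of (Sum.inl i))⁻¹)⁻¹ *
        (ιy (wN (cN i j b)))⁻¹) = 1
      rw [map_mul, map_mul, map_mul, map_inv, map_inv, h1, h2, h3, h4, mul_inv_cancel]
    · obtain ⟨r, hr, rfl⟩ := hw
      have hr0 : r ∈ fN.ker := by rw [hkerN]; exact Subgroup.subset_normalClosure hr
      have hr1 : fN r = 1 := hr0
      rw [hφy, hr1]
      rfl
  have hφsurj : Function.Surjective φ := by
    intro h
    obtain ⟨u, hu⟩ := hfQ (π h)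
    have hmem : h * (φ (ιx u))⁻¹ ∈ N := by
      have h5 : π (h * (φ (ιx u))⁻¹) = 1 := by
        rw [map_mul, map_inv, hπx, hu, mul_inv_cancel]
      exact (QuotientGroup.eq_one_iff _).mp h5
    refine ⟨ιy (wN ⟨h * (φ (ιx u))⁻¹, hmem⟩) * ιx u, ?_⟩
    rw [map_mul, hφy, hwN]
    simp
  have hKle : Subgroup.normalClosure R ≤ φ.ker :=
    Subgroup.normalClosure_le_normal (fun w hw => hrel_ker w hw)
  have hker_eq : φ.ker = Subgroup.normalClosure R := by
    refine le_antisymm ?_ hKle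
    set K := Subgroup.normalClosure R with hK
    set mk : FreeGroup (Fin n ⊕ Fin m) →* (FreeGroup (Fin n ⊕ Fin m) ⧸ K) :=
      QuotientGroup.mk' K with hmk
    set px := mk.comp ιx with hpx
    set py := mk.comp ιy with hpy
    set Y : Subgroup (FreeGroup (Fin n ⊕ Fin m) ⧸ K) := py.range with hY
    have hmkR : ∀ w ∈ R, mk w = 1 := fun w hw =>
      (QuotientGroup.eq_one_iff w).2 (Subgroup.subset_normalClosure hw)
    set S : Set (FreeGroup (Fin n ⊕ Fin m) ⧸ K) :=
      Set.range (fun j : Fin m => py (FreeGroup.of j)) with hS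
    have hYS : Y = Subgroup.closure S := by
      rw [hY, MonoidHom.range_eq_map, ← FreeGroup.closure_range_of (Fin m),
        MonoidHom.map_closure, hS]
      congr 1
      ext x
      simp [Set.range_comp]
    have hconj_gen : ∀ (i : Fin n) (b : Bool) (j : Fin m),
        mk (cond b (FreeGroup.of (Sum.inl i)) (FreeGroup.of (Sum.inl i))⁻¹) *
          py (FreeGroup.of j) *
          (mk (cond b (FreeGroup.of (Sum.inl i)) (FreeGroup.of (Sum.inl i))⁻¹))⁻¹ ∈ Y := by
      intro i b j
      have h0 : mk ((cond b (FreeGroup.of (Sum.inl i)) (FreeGroup.of (Sum.inl i))⁻¹) *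
          FreeGroup.of (Sum.inr j) *
          (cond b (FreeGroup.of (Sum.inl i)) (FreeGroup.of (Sum.inl i))⁻¹)⁻¹ *
          (ιy (wN (cN i j b)))⁻¹) = 1 :=
        hmkR _ (Or.inl (Or.inr ⟨(i, j, b), rfl⟩))
      rw [map_mul, map_mul, map_mul, map_inv, map_inv, mul_inv_eq_one] at h0
      have h2 : py (FreeGroup.of j) = mk (FreeGroup.of (Sum.inr j)) := rfl
      rw [h2, h0]
      exact ⟨wN (cN i j b), rfl⟩
    have hPtop : Subgroup.closure
        (Set.range (fun k : Fin n ⊕ Fin m => mk (FreeGroup.of k))) = ⊤ := by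
      have h6 : (fun k : Fin n ⊕ Fin m => mk (FreeGroup.of k))
          = mk ∘ FreeGroup.of := rfl
      rw [h6, Set.range_comp, ← MonoidHom.map_closure, FreeGroup.closure_range_of,
        ← MonoidHom.range_eq_map]
      exact MonoidHom.range_eq_top.2 (QuotientGroup.mk'_surjective _)
    have hconjY : ∀ (i : Fin n) (b : Bool) (p : _), p ∈ Y →
        mk (cond b (FreeGroup.of (Sum.inl i)) (FreeGroup.of (Sum.inl i))⁻¹) * p *
        (mk (cond b (FreeGroup.of (Sum.inl i)) (FreeGroup.of (Sum.inl i))⁻¹))⁻¹ ∈ Y := by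
      intro i b p hp
      rw [hYS] at hp ⊢
      refine conj_mem_closure_of_gen S _ ?_ p hp
      rintro s ⟨j, rfl⟩
      rw [← hYS]
      exact hconj_gen i b j
    have hnormY : Y.Normal := by
      rw [← Subgroup.normalizer_eq_top_iff, eq_top_iff, ← hPtop, Subgroup.closure_le]
      rintro s ⟨k, rfl⟩
      rcases k with i | j
      · rw [SetLike.mem_coe, Subgroup.mem_normalizer_iff]
        intro p
        constructor
        · intro hp
          have := hconjY i true p hp
          simpa using this
        · intro hp
          have := hconjY i false _ hp
          simp only [cond] at this
          rw [map_inv] at this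
          convert this using 1
          group
      · exact Subgroup.le_normalizer (⟨FreeGroup.of j, rfl⟩ : mk (FreeGroup.of (Sum.inr j)) ∈ Y)
    have hsup : px.range ⊔ Y = ⊤ := by
      rw [eq_top_iff, ← hPtop, Subgroup.closure_le]
      rintro s ⟨k, rfl⟩
      rcases k with i | j
      · exact Subgroup.mem_sup_left ⟨FreeGroup.of i, rfl⟩
      · exact Subgroup.mem_sup_right ⟨FreeGroup.of j, rfl⟩
    have hdecomp : ∀ p : FreeGroup (Fin n ⊕ Fin m) ⧸ K,
        ∃ u v, p = px u * py v := by
      intro p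
      have hp : p ∈ px.range ⊔ Y := by rw [hsup]; exact Subgroup.mem_top p
      rw [← SetLike.mem_coe, Subgroup.mul_normal] at hp
      obtain ⟨x, hx, y, hy, rfl⟩ := hp
      obtain ⟨u, rfl⟩ := hx
      obtain ⟨v, rfl⟩ := hy
      exact ⟨u, v, rfl⟩
    -- now the main inclusion
    intro w hw
    have hφw : φ w = 1 := hw
    obtain ⟨u, v, huv⟩ := hdecomp (mk w)
    set φ' : (FreeGroup (Fin n ⊕ Fin m) ⧸ K) →* H := QuotientGroup.lift K φ hKle with hφ'
    have hφ'mk : ∀ z, φ' (mk z) = φ z := fun z => rfl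
    have hu1 : fQ u = 1 := by
      have e1 : φ w = φ (ιx u) * φ (ιy v) := by
        calc φ w = φ' (mk w) := rfl
        _ = φ' (px u) * φ' (py v) := by rw [huv, map_mul]
        _ = φ (ιx u) * φ (ιy v) := rfl
      have e2 : π (φ w) = fQ u := by
        rw [e1, map_mul, hπx, hφy]
        have : π ((fN v : N) : H) = 1 := (QuotientGroup.eq_one_iff _).2 (fN v).2
        rw [this, mul_one]
      rw [hφw, map_one] at e2
      exact e2.symm
    have hu_mem : u ∈ Subgroup.normalClosure RQ := by rw [← hkerQ]; exact hu1
    have hpxu : px u ∈ Y := by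
      haveI : ((Y.comap px)).Normal := hnormY.comap px
      have h7 : Subgroup.normalClosure RQ ≤ Y.comap px := by
        apply Subgroup.normalClosure_le_normal
        intro r hr
        have h8 : mk (rel1 r) = 1 := hmkR _ (Or.inl (Or.inl ⟨r, hr, rfl⟩))
        rw [hrel1] at h8
        rw [map_mul, map_inv, mul_inv_eq_one] at h8
        have : px r = py (wN (nr r)) := h8
        show px r ∈ Y
        rw [this]
        exact ⟨wN (nr r), rfl⟩
      exact h7 hu_mem
    obtain ⟨v2, hv2⟩ := hpxu
    have hmkw : mk w = py (v2 * v) := by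
      rw [huv, ← hv2, ← map_mul]
    have hfNv : fN (v2 * v) = 1 := by
      have e3 : φ w = ((fN (v2 * v) : N) : H) := by
        rw [← hφ'mk w, hmkw]
        have : φ' (py (v2 * v)) = φ (ιy (v2 * v)) := rfl
        rw [this, hφy]
      rw [hφw] at e3
      exact Subtype.ext e3.symm
    have hv_mem : v2 * v ∈ Subgroup.normalClosure RN := by rw [← hkerN]; exact hfNv
    have hpy_ker : Subgroup.normalClosure RN ≤ py.ker := by
      apply Subgroup.normalClosure_le_normal
      intro r hr
      have : mk (ιy r) = 1 := hmkR _ (Or.inr ⟨r, hr, rfl⟩)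
      exact this
    have : mk w = 1 := by rw [hmkw]; exact hpy_ker hv_mem
    rwa [hmk, ← MonoidHom.mem_ker, QuotientGroup.ker_mk'] at this
  exact fp_of_surjective φ hφsurj R hRfin hker_eq

/-- The free group on one generator is `Multiplicative ℤ`. -/
noncomputable def freeGroupUnitEquivMulInt : FreeGroup Unit ≃* Multiplicative ℤ :=
  MonoidHom.toMulEquiv
    (FreeGroup.lift (fun _ => Multiplicative.ofAdd (1 : ℤ)))
    (zpowersHom (FreeGroup Unit) (FreeGroup.of ()))
    (by
      ext ⟨⟩
      simp [zpowersHom_apply])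
    (by
      apply MonoidHom.ext_mint
      simp [zpowersHom_apply])

lemma freeGroupUnit_mul_comm (x y : FreeGroup Unit) : x * y = y * x := by
  apply freeGroupUnitEquivMulInt.injective
  simp only [map_mul]
  exact mul_comm _ _

lemma normalClosure_eq_closure_of_comm {G : Type*} [Group G]
    (hc : ∀ x y : G, x * y = y * x) (S : Set G) :
    Subgroup.normalClosure S = Subgroup.closure S := by
  haveI : (Subgroup.closure S).Normal := by
    constructor
    intro a ha gg
    have : gg * a * gg⁻¹ = a := by rw [hc gg a, mul_assoc, mul_inv_cancel, mul_one]
    rwa [this]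
  refine le_antisymm
    (Subgroup.normalClosure_le_normal Subgroup.subset_closure)
    ((Subgroup.closure_le _).2 Subgroup.subset_normalClosure)

lemma fp_of_zpowers_eq_top {G : Type*} [Group G] (g : G)
    (hg : Subgroup.zpowers g = ⊤) : IsFinitelyPresentedGroup G := by
  set e := freeGroupUnitEquivMulInt with he
  set f : FreeGroup Unit →* G := (zpowersHom G g).comp e.toMonoidHom with hf
  have hfw : ∀ w, f w = g ^ (e w).toAdd := fun w => rfl
  have hsurj : Function.Surjective f := by
    intro h
    have : h ∈ Subgroup.zpowers g := hg ▸ Subgroup.mem_top h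
    obtain ⟨k, hk⟩ := Subgroup.mem_zpowers_iff.mp this
    exact ⟨e.symm (Multiplicative.ofAdd k), by
      rw [hfw]
      simp [hk]⟩
  set d : ℤ := (orderOf g : ℤ) with hd
  set z : FreeGroup Unit := (FreeGroup.of ()) ^ d with hz
  have hez : (e z).toAdd = d := by
    rw [hz, map_zpow]
    simp [he, freeGroupUnitEquivMulInt, MonoidHom.toMulEquiv]
  have hker : f.ker = Subgroup.normalClosure {z} := by
    rw [normalClosure_eq_closure_of_comm freeGroupUnit_mul_comm,
      ← Subgroup.zpowers_eq_closure]
    ext w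
    rw [MonoidHom.mem_ker, hfw, ← orderOf_dvd_iff_zpow_eq_one, Subgroup.mem_zpowers_iff]
    constructor
    · rintro ⟨k, hk⟩
      refine ⟨k, e.injective (Multiplicative.toAdd.injective ?_)⟩
      rw [map_zpow]
      simp only [toAdd_zpow, hez]
      rw [smul_eq_mul, mul_comm, hk]
    · rintro ⟨k, rfl⟩
      refine ⟨k, ?_⟩
      rw [map_zpow]
      simp only [toAdd_zpow, hez, smul_eq_mul, mul_comm]
      rfl
  exact fp_of_surjective f hsurj {z} (Set.finite_singleton z) hker

lemma fp_of_subsingleton (G : Type*) [Group G] [Subsingleton G] :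
    IsFinitelyPresentedGroup G :=
  fp_of_zpowers_eq_top (1 : G) (by
    rw [Subgroup.eq_top_iff']
    intro x
    rw [Subsingleton.elim x 1]
    exact one_mem _)

universe u

lemma fp_of_comm_aux : ∀ (k : ℕ) (G : Type u) [CommGroup G] (S : Finset G),
    S.card ≤ k → Subgroup.closure (S : Set G) = ⊤ → IsFinitelyPresentedGroup G := by
  intro k
  induction k with
  | zero =>
    intro G _ S hcard hS
    have : S = ∅ := Finset.card_eq_zero.mp (Nat.le_zero.mp hcard)
    rw [this] at hS
    simp only [Finset.coe_empty, Subgroup.closure_empty] at hS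
    haveI : Subsingleton G := by
      constructor
      intro a b
      have ha : a ∈ (⊥ : Subgroup G) := hS ▸ Subgroup.mem_top a
      have hb : b ∈ (⊥ : Subgroup G) := hS ▸ Subgroup.mem_top b
      rw [Subgroup.mem_bot] at ha hb
      rw [ha, hb]
    exact fp_of_subsingleton G
  | succ k ih =>
    intro G _ S hcard hS
    classical
    rcases Finset.eq_empty_or_nonempty S with rfl | ⟨g, hg⟩
    · exact ih G ∅ (Nat.zero_le k) (by simpa using hS)
    set N := Subgroup.zpowers g with hN
    haveI : N.Normal := Subgroup.normal_of_comm N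
    have h1 : IsFinitelyPresentedGroup N := by
      refine fp_of_zpowers_eq_top (⟨g, Subgroup.mem_zpowers g⟩ : N) ?_
      rw [Subgroup.eq_top_iff']
      intro x
      obtain ⟨j, hj⟩ := Subgroup.mem_zpowers_iff.mp x.2
      refine Subgroup.mem_zpowers_iff.mpr ⟨j, ?_⟩
      ext
      rw [SubgroupClass.coe_zpow]
      exact hj
    have h2 : IsFinitelyPresentedGroup (G ⧸ N) := by
      set mk : G →* G ⧸ N := QuotientGroup.mk' N with hmk
      refine ih (G ⧸ N) ((S.erase g).image mk) ?_ ?_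
      · calc ((S.erase g).image mk).card ≤ (S.erase g).card := Finset.card_image_le
        _ ≤ S.card - 1 := by rw [Finset.card_erase_of_mem hg]
        _ ≤ k := by omega
      · have htop : Subgroup.closure (mk '' (S : Set G)) = ⊤ := by
          rw [← MonoidHom.map_closure, hS]
          exact Subgroup.map_top_of_surjective mk (QuotientGroup.mk'_surjective N)
        rw [eq_top_iff, ← htop, Subgroup.closure_le]
        rintro x ⟨a, ha, rfl⟩
        rcases eq_or_ne a g with rfl | hne
        · have : mk a = 1 := (QuotientGroup.eq_one_iff a).2 (Subgroup.mem_zpowers a)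
          rw [this]
          exact one_mem _
        · exact Subgroup.subset_closure (Finset.mem_coe.mpr
            (Finset.mem_image_of_mem mk (Finset.mem_erase.mpr ⟨hne, Finset.mem_coe.mp ha⟩)))
    exact fp_of_normal N h1 h2

lemma fp_of_comm_fg (G : Type u) [CommGroup G] (h : Group.FG G) :
    IsFinitelyPresentedGroup G := by
  obtain ⟨n, S, h1, h2⟩ := (Group.fg_iff').mp h
  exact fp_of_comm_aux n G S (le_of_eq h1) h2

lemma subgroup_fg_of_comm_fg {A : Type*} [CommGroup A] (hA : Group.FG A)
    (B : Subgroup A) : B.FG := by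
  haveI : AddGroup.FG (Additive A) := GroupFG.iff_add_fg.mp hA
  haveI : Module.Finite ℤ (Additive A) := Module.Finite.iff_addGroup_fg.mpr ‹_›
  haveI : IsNoetherian ℤ (Additive A) := isNoetherian_of_isNoetherianRing_of_finite ℤ _
  have h := IsNoetherian.noetherian (AddSubgroup.toIntSubmodule (Subgroup.toAddSubgroup B))
  rw [Submodule.fg_iff_addSubgroup_fg] at h
  rw [Subgroup.fg_iff_add_fg]
  exact h

lemma subgroup_fg_map {G G' : Type*} [Group G] [Group G'] {H : Subgroup G}
    (hH : H.FG) (f : G →* G') : (H.map f).FG := by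
  rw [Subgroup.fg_iff] at hH ⊢
  obtain ⟨S, hS, hSfin⟩ := hH
  exact ⟨f '' S, by rw [← MonoidHom.map_closure, hS], hSfin.image f⟩

/-- If `C` is a coherent group and `A` is a finitely generated abelian
group, then `C × A` is coherent. -/
theorem coherent_prod_fg_abelian (C A : Type*) [Group C] [CommGroup A]
    (hC : IsCoherentGroup C) (hA : Group.FG A) :
    IsCoherentGroup (C × A) := by
  intro H hH
  set p : H →* C := (MonoidHom.fst C A).comp H.subtype with hp
  set N := p.ker with hN
  have h2 : IsFinitelyPresentedGroup (H ⧸ N) := by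
    have hrange : p.range = Subgroup.map (MonoidHom.fst C A) H := by
      rw [hp, MonoidHom.range_comp, Subgroup.range_subtype]
    have hfgr : (Subgroup.map (MonoidHom.fst C A) H).FG := subgroup_fg_map hH _
    have hfp : IsFinitelyPresentedGroup (Subgroup.map (MonoidHom.fst C A) H) :=
      hC _ hfgr
    refine fp_congr ((QuotientGroup.quotientKerEquivRange p).trans
      (MulEquiv.subgroupCongr hrange)).symm hfp
  have h1 : IsFinitelyPresentedGroup N := by
    set ψ : N →* A := (MonoidHom.snd C A).comp (H.subtype.comp N.subtype) with hψ
    have hinj : Function.Injective ψ := by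
      intro x y hxy
      have hx1 : ((x : H) : C × A).1 = 1 := x.2
      have hy1 : ((y : H) : C × A).1 = 1 := y.2
      apply Subtype.ext
      apply Subtype.ext
      exact Prod.ext (hx1.trans hy1.symm) hxy
    have hfg : ψ.range.FG := subgroup_fg_of_comm_fg hA ψ.range
    have hfp : IsFinitelyPresentedGroup ψ.range :=
      fp_of_comm_fg _ ((Group.fg_iff_subgroup_fg _).mpr hfg)
    exact fp_congr (MonoidHom.ofInjective hinj).symm hfp
  exact fp_of_normal N h1 h2

end PaperBase
end

section
/- Let G be a non-abelian group generated by a finite set X, satisfying: (C1) G is torsion-free; (C2) G has the big powers property; (C4)(a) disjoint commuting subsets Y, Y' of X generate their direct product ⟨Y⟩ × ⟨Y'⟩ and (b) x ∈ X with x ∈ ⟨Y⟩ for Y ⊆ X implies x ∈ Y; and the condition that for every g ∈ G, the centraliser C(g) is either conjugate to a canonical subgroup (one generated by a subset of X) or equal to ⟨g₀⟩ for an element g₀ which is not a proper power. If G is a CSA group, then G belongs to the class 𝒞. -/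
namespace PaperBase

/-- A subgroup is abelian: all its elements commute. -/
def IsAbelianSub {G : Type*} [Group G] (H : Subgroup G) : Prop :=
  ∀ a ∈ H, ∀ b ∈ H, a * b = b * a

/-- `L` is the internal direct product of its subgroups `H` and `K`. -/
def IsIDP {G : Type*} [Group G] (H K L : Subgroup G) : Prop :=
  (∀ h ∈ H, ∀ k ∈ K, Commute h k) ∧ H ⊓ K = ⊥ ∧ H ⊔ K = L

/-- `L` is the internal direct product of the family of subgroups `H i`. -/
def IsIDPFamily {G : Type*} [Group G] {ι : Type*} (H : ι → Subgroup G)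
    (L : Subgroup G) : Prop :=
  (∀ i j, i ≠ j → ∀ x ∈ H i, ∀ y ∈ H j, Commute x y) ∧
  (∀ i, H i ⊓ (⨆ (j) (_ : j ≠ i), H j) = ⊥) ∧
  (⨆ i, H i) = L

/-- The conjugate `h H h⁻¹` of a subgroup. -/
def conjSub {G : Type*} [Group G] (h : G) (H : Subgroup G) : Subgroup G :=
  H.map (MulAut.conj h).toMonoidHom

/-- Two subgroups are conjugate. -/
def AreConjSub {G : Type*} [Group G] (H K : Subgroup G) : Prop :=
  ∃ h : G, K = conjSub h H

/-- The big powers (BP) property: for every generic tuple `u` of non-trivial elements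
there is a bound `n` such that `u 0 ^ α 0 * ⋯ * u k ^ α k = 1` with all `α i > 0`
forces some `α i < n`. -/
def HasBigPowers (G : Type*) [Group G] : Prop :=
  ∀ (k : ℕ) (u : Fin (k + 1) → G), (∀ i, u i ≠ 1) →
    (∀ i : Fin k, ¬ Commute (u i.castSucc) (u i.succ)) →
    ∃ n : ℕ, ∀ α : Fin (k + 1) → ℕ, (∀ i, 0 < α i) →
      (List.ofFn fun i => u i ^ α i).prod = 1 → ∃ i, α i < n

/-- Unique roots. -/
def HasUniqueRoots (G : Type*) [Group G] : Prop :=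
  ∀ (g h : G) (n : ℕ), n ≠ 0 → g ^ n = h ^ n → g = h

/-- A root element: not a proper power. -/
def IsRootElement {G : Type*} [Group G] (g : G) : Prop :=
  ¬ ∃ (h : G) (n : ℕ), 2 ≤ n ∧ g = h ^ n

/-- A canonical subgroup with respect to the generating set `X`. -/
def IsCanonical {G : Type*} [Group G] (X : Set G) (H : Subgroup G) : Prop :=
  ∃ Y ⊆ X, H = Subgroup.closure Y

/-- `Y` is a minimal (by inclusion) subset of `X` satisfying `p`. -/
def MinimalWith {G : Type*} [Group G] (X : Set G) (p : Set G → Prop)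
    (Y : Set G) : Prop :=
  Y ⊆ X ∧ p Y ∧ ∀ Y' ⊆ Y, p Y' → Y' = Y

/-- The centre of a subgroup `H`, viewed as a subgroup of the ambient group. -/
def subCenter {G : Type*} [Group G] (H : Subgroup G) : Subgroup G :=
  H ⊓ Subgroup.centralizer (H : Set G)

/-- The generators `K` of a prospective subgroup `O(w)` commute with, and avoid, every
minimal subset `Y ⊆ X` satisfying `cond`. -/
def OProp {G : Type*} [Group G] (X : Set G) (cond : Set G → Prop) (K : Set G) : Prop :=
  ∀ Y : Set G, MinimalWith X cond Y → ∀ o ∈ K, (∀ y ∈ Y, Commute o y) ∧ o ∉ Y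

/-- `H` is the maximal canonical subgroup whose generators commute with, and avoid,
every minimal subset `Y ⊆ X` satisfying `cond`. -/
def MaxCanonicalWith {G : Type*} [Group G] (X : Set G) (cond : Set G → Prop)
    (H : Subgroup G) : Prop :=
  ∃ K ⊆ X, H = Subgroup.closure K ∧ OProp X cond K ∧
    ∀ K' ⊆ X, OProp X cond K' → Subgroup.closure K' ≤ H

/-- Torsion-free monoid (the removed Mathlib `Monoid.IsTorsionFree`, old meaning):
no nontrivial element has finite order. -/
def Monoid.IsTorsionFree (G : Type*) [Monoid G] : Prop :=
  ∀ g : G, g ≠ 1 → ¬IsOfFinOrder g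

/-- Conditions (C1)--(C8) for membership in the class 𝒞, with respect to the generating
set `X`, the set of representatives `W` and the centraliser decompositions `Z`, `O`. -/
structure ClassCWith (G : Type*) [Group G] (X W : Set G)
    (Z O : G → Subgroup G) : Prop where
  gen : Subgroup.closure X = ⊤
  /-- (C1) -/
  torsionFree : Monoid.IsTorsionFree G
  /-- (C2) -/
  bigPowers : HasBigPowers G
  /-- (C3) -/
  uniqueRoots : HasUniqueRoots G
  /-- (C4)(a) -/
  c4a : ∀ Y Y' : Set G, Y ⊆ X → Y' ⊆ X → Disjoint Y Y' →
    (∀ y ∈ Y, ∀ y' ∈ Y', Commute y y') →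
    IsIDP (Subgroup.closure Y) (Subgroup.closure Y') (Subgroup.closure (Y ∪ Y'))
  /-- (C4)(b) -/
  c4b : ∀ x ∈ X, ∀ Y ⊆ X, x ∈ Subgroup.closure Y → x ∈ Y
  /-- (C6)(a) -/
  c6a : ∀ g : G, ∃ (k : ℕ) (ws : Fin (k + 1) → G) (h : G),
    (∀ i, ws i ∈ W) ∧
    (∀ i, Subgroup.centralizer {g} = conjSub h (Subgroup.centralizer {ws i})) ∧
    (IsAbelianSub (Subgroup.centralizer {g}) → k = 0)
  /-- (C6)(b): `C(w) = Z(w) × O(w)` -/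
  c6b : ∀ w ∈ W, IsIDP (Z w) (O w) (Subgroup.centralizer {w})
  /-- (C6)(b)(i) -/
  c6bi : ∀ w ∈ W, IsAbelianSub (Subgroup.centralizer {w}) →
    IsCanonical X (Subgroup.centralizer {w}) →
    Z w = ⊥ ∧ O w = Subgroup.centralizer {w}
  /-- (C6)(b)(ii) -/
  c6bii : ∀ w ∈ W, IsAbelianSub (Subgroup.centralizer {w}) →
    ¬ IsCanonical X (Subgroup.centralizer {w}) →
    (∃ z : G, Z w = Subgroup.zpowers z) ∧ ¬ IsCanonical X (Z w) ∧
    MaxCanonicalWith X (fun Y => Z w ≤ Subgroup.closure Y) (O w)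
  /-- (C6)(b)(iii) -/
  c6biii : ∀ w ∈ W, ¬ IsAbelianSub (Subgroup.centralizer {w}) →
    MaxCanonicalWith X (fun Y => w ∈ Subgroup.closure Y) (O w)
  /-- (C6)(c) -/
  c6c : ∀ w ∈ W, ∀ g ∈ O w,
    ¬ AreConjSub (Subgroup.centralizer {w}) (Subgroup.centralizer ({g} : Set G)) →
    ∃ w₀ h : G, w₀ ∈ W ∧ w₀ ∈ O w ∧ h ∈ O w ∧
      Subgroup.centralizer ({g} : Set G) = conjSub h (Subgroup.centralizer {w₀})
  /-- (C7) -/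
  c7 : ∀ w ∈ W, IsAbelianSub (Subgroup.centralizer {w}) →
    ∀ a h : G, a ∈ Subgroup.centralizer ({w} : Set G) →
      h⁻¹ * a * h ∈ Subgroup.centralizer ({w} : Set G) →
      h ∉ Subgroup.centralizer ({w} : Set G) →
      a ∈ O w ∧ Commute h a
  /-- (C8) -/
  c8 : ∀ w ∈ W, ¬ IsAbelianSub (Subgroup.centralizer {w}) →
    IsCanonical X (Subgroup.centralizer {w}) ∧
    (∃ Yw : Set G, MinimalWith X (fun Y => w ∈ Subgroup.closure Y) Yw ∧
      Z w = Subgroup.closure Yw) ∧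
    IsCanonical X (subCenter (Subgroup.centralizer {w}))

/-- `G` belongs to the class `𝒞(X, W)`. -/
def MemClassC (G : Type*) [Group G] (X W : Set G) : Prop :=
  ∃ Z O : G → Subgroup G, ClassCWith G X W Z O

/-- `G` belongs to the class `𝒞`. -/
def InClassC (G : Type*) [Group G] : Prop :=
  ∃ X W : Set G, MemClassC G X W

/-- `H` is discriminated by (fully residually) `G`. -/
def DiscriminatedBy (H G : Type*) [Group H] [Group G] : Prop :=
  ∀ S : Finset H, (∀ x ∈ S, x ≠ 1) → ∃ f : H →* G, ∀ x ∈ S, f x ≠ 1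

/-- A finitely generated free abelian subgroup. -/
def IsFGFreeAbelianSub {G : Type*} [Group G] (H : Subgroup G) : Prop :=
  ∃ n : ℕ, Nonempty (H ≃* Multiplicative (Fin n → ℤ))



/-- A group is CSA if every maximal abelian subgroup `M` is malnormal:
`g⁻¹ M g ∩ M = 1` for all `g ∉ M`. -/
def IsCSA (G : Type*) [Group G] : Prop :=
  ∀ M : Subgroup G, IsAbelianSub M →
    (∀ N : Subgroup G, IsAbelianSub N → M ≤ N → M = N) →
    ∀ g : G, g ∉ M → conjSub g M ⊓ M = ⊥


section Aux

variable {G : Type*} [Group G]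

lemma mem_cent_single {a x : G} :
    x ∈ Subgroup.centralizer ({a} : Set G) ↔ Commute x a :=
  Subgroup.mem_centralizer_singleton_iff

lemma self_mem_cent (a : G) : a ∈ Subgroup.centralizer ({a} : Set G) :=
  mem_cent_single.2 rfl

lemma mem_conjSub {h x : G} {H : Subgroup G} : x ∈ conjSub h H ↔ h⁻¹ * x * h ∈ H := by
  unfold conjSub
  rw [Subgroup.mem_map]
  constructor
  · rintro ⟨y, hy, rfl⟩
    simpa [MulAut.conj_apply, mul_assoc] using hy
  · intro hx
    exact ⟨h⁻¹ * x * h, hx, by simp [MulAut.conj_apply, mul_assoc]⟩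

lemma conjSub_one (H : Subgroup G) : conjSub 1 H = H := by
  ext x; simp [mem_conjSub]

lemma conjSub_conjSub (a b : G) (H : Subgroup G) :
    conjSub a (conjSub b H) = conjSub (a * b) H := by
  ext x; simp [mem_conjSub, mul_assoc]

lemma conjSub_centralizer (h w : G) :
    conjSub h (Subgroup.centralizer {w}) = Subgroup.centralizer {h * w * h⁻¹} := by
  ext x
  simp only [mem_conjSub, mem_cent_single, Commute, SemiconjBy]
  constructor
  · intro e
    simpa [mul_assoc] using congrArg (fun t => h * t * h⁻¹) e
  · intro e
    simpa [mul_assoc] using congrArg (fun t => h⁻¹ * t * h) e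

lemma exists_maximal_abelian (a : G) :
    ∃ M : Subgroup G, a ∈ M ∧ IsAbelianSub M ∧
      ∀ N, IsAbelianSub N → M ≤ N → M = N := by
  set s : Set (Subgroup G) := {H | IsAbelianSub H} with hs
  have hz : Subgroup.zpowers a ∈ s := by
    rintro x ⟨m, rfl⟩ y ⟨n, rfl⟩
    exact Commute.zpow_zpow_self a m n
  have key : ∀ c ⊆ s, IsChain (· ≤ ·) c → ∀ y ∈ c, ∃ ub ∈ s, ∀ z ∈ c, z ≤ ub := by
    intro c hcs hc y hy
    refine ⟨sSup c, ?_, fun z hz' => le_sSup hz'⟩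
    intro x hx v hv
    rw [Subgroup.mem_sSup_of_directedOn ⟨y, hy⟩ hc.directedOn] at hx hv
    obtain ⟨P, hP, hxP⟩ := hx
    obtain ⟨Q, hQ, hvQ⟩ := hv
    rcases hc.total hP hQ with h | h
    · exact hcs hQ x (h hxP) v hvQ
    · exact hcs hP x hxP v (h hvQ)
  obtain ⟨m, hm1, hm2⟩ := zorn_le_nonempty₀ s key (Subgroup.zpowers a) hz
  exact ⟨m, hm1 (Subgroup.mem_zpowers a), hm2.1,
    fun N hN hle => le_antisymm hle (hm2.2 hN hle)⟩

lemma cent_abelian (hCSA : IsCSA G) {a : G} (ha : a ≠ 1) :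
    IsAbelianSub (Subgroup.centralizer ({a} : Set G)) := by
  obtain ⟨M, haM, hab, hmax⟩ := exists_maximal_abelian a
  have hML : M ≤ Subgroup.centralizer ({a} : Set G) := fun m hm =>
    mem_cent_single.2 (hab m hm a haM)
  have hLM : Subgroup.centralizer ({a} : Set G) ≤ M := by
    intro c hc
    by_contra hcM
    have hmal := hCSA M hab hmax c hcM
    have hca : Commute c a := mem_cent_single.1 hc
    have haconj : a ∈ conjSub c M ⊓ M := by
      refine ⟨mem_conjSub.2 ?_, haM⟩
      have : c⁻¹ * a * c = a := by
        rw [mul_assoc, ← hca.eq, ← mul_assoc, inv_mul_cancel, one_mul]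
      rw [this]; exact haM
    rw [hmal] at haconj
    exact ha (Subgroup.mem_bot.1 haconj)
  have hMC : M = Subgroup.centralizer ({a} : Set G) := le_antisymm hML hLM
  rw [← hMC]; exact hab

lemma cent_maximal {a : G} (hab : IsAbelianSub (Subgroup.centralizer ({a} : Set G))) :
    ∀ N, IsAbelianSub N → Subgroup.centralizer ({a} : Set G) ≤ N →
      Subgroup.centralizer ({a} : Set G) = N := by
  intro N hN hle
  refine le_antisymm hle fun n hn => mem_cent_single.2 ?_
  exact (hN a (hle (self_mem_cent a)) n hn).symm

lemma comm_trans (hCSA : IsCSA G) {a b c : G} (ha : a ≠ 1)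
    (h1 : Commute a b) (h2 : Commute a c) : Commute b c := by
  have hab := cent_abelian hCSA ha
  exact hab b (mem_cent_single.2 h1.symm) c (mem_cent_single.2 h2.symm)

lemma cent_eq_of_commute (hCSA : IsCSA G) {w g : G} (hw : w ≠ 1) (hg : g ≠ 1)
    (hcomm : Commute g w) :
    Subgroup.centralizer ({g} : Set G) = Subgroup.centralizer ({w} : Set G) := by
  ext x
  simp only [mem_cent_single]
  constructor
  · intro hx
    exact (comm_trans hCSA hg hcomm hx.symm).symm
  · intro hx
    exact (comm_trans hCSA hw hcomm.symm hx.symm).symm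

lemma exists_minimalWith {G : Type*} [Group G] {X : Set G} (hfin : X.Finite)
    {p : Set G → Prop} (hex : ∃ Y, Y ⊆ X ∧ p Y) : ∃ Y, MinimalWith X p Y := by
  set s : Set (Set G) := {Y | Y ⊆ X ∧ p Y} with hsdef
  have hs : s.Finite := hfin.finite_subsets.subset fun Y hY => hY.1
  obtain ⟨Y0, hY0⟩ := hex
  obtain ⟨Y, hYs, hmin⟩ := Set.Finite.exists_minimalFor id s hs ⟨Y0, hY0⟩
  refine ⟨Y, hYs.1, hYs.2, fun Y' hY'Y hpY' => ?_⟩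
  exact le_antisymm hY'Y (hmin ⟨hY'Y.trans hYs.1, hpY'⟩ hY'Y)

end Aux

/-- A non-abelian, finitely generated, torsion-free CSA group with the
big powers property, satisfying (C4) and whose centralisers of elements are either
conjugate to canonical subgroups or cyclic generated by a non-proper-power, belongs to
the class `𝒞`. -/
theorem csa_mem_classC (G : Type*) [Group G]
    (hna : ¬ ∀ a b : G, a * b = b * a)
    (X : Set G) (hfin : X.Finite) (hgen : Subgroup.closure X = ⊤)
    (hC1 : Monoid.IsTorsionFree G)
    (hC2 : HasBigPowers G)
    (hC4a : ∀ Y Y' : Set G, Y ⊆ X → Y' ⊆ X → Disjoint Y Y' →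
      (∀ y ∈ Y, ∀ y' ∈ Y', Commute y y') →
      IsIDP (Subgroup.closure Y) (Subgroup.closure Y')
        (Subgroup.closure (Y ∪ Y')))
    (hC4b : ∀ x ∈ X, ∀ Y ⊆ X, x ∈ Subgroup.closure Y → x ∈ Y)
    (hcent : ∀ g : G,
      (∃ (h : G) (H : Subgroup G), IsCanonical X H ∧
        Subgroup.centralizer {g} = conjSub h H) ∨
      (∃ g₀ : G, IsRootElement g₀ ∧
        Subgroup.centralizer ({g} : Set G) = Subgroup.zpowers g₀))
    (hCSA : IsCSA G) :
    InClassC G := by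
  classical
  have htop_nonab : ¬ IsAbelianSub (⊤ : Subgroup G) := fun h =>
    hna fun a b => h a trivial b trivial
  have hcent1 : Subgroup.centralizer ({(1 : G)} : Set G) = ⊤ := by
    ext x; simp [mem_cent_single]
  have habel : ∀ w : G, w ≠ 1 → IsAbelianSub (Subgroup.centralizer ({w} : Set G)) :=
    fun w hw => cent_abelian hCSA hw
  have hone : ∀ w : G, ¬ IsAbelianSub (Subgroup.centralizer ({w} : Set G)) → w = 1 := by
    intro w hnab
    by_contra hw
    exact hnab (habel w hw)
  have hcan_top : IsCanonical X (⊤ : Subgroup G) := ⟨X, subset_rfl, hgen.symm⟩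
  have hcan_bot : IsCanonical X (⊥ : Subgroup G) :=
    ⟨∅, Set.empty_subset X, Subgroup.closure_empty.symm⟩
  set W : Set G := {w | IsCanonical X (Subgroup.centralizer ({w} : Set G)) ∨
    ∃ g₀ : G, Subgroup.centralizer ({w} : Set G) = Subgroup.zpowers g₀} with hWdef
  have h1W : (1 : G) ∈ W := Or.inl (by rw [hcent1]; exact hcan_top)
  have cover : ∀ g : G, ∃ w h : G, w ∈ W ∧
      Subgroup.centralizer ({g} : Set G) = conjSub h (Subgroup.centralizer ({w} : Set G)) := by
    intro g
    rcases hcent g with ⟨h, H, hHcan, hCg⟩ | ⟨g₀, _, hzp⟩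
    · have e1 : Subgroup.centralizer ({h⁻¹ * g * h} : Set G) = H := by
        have e2 := conjSub_centralizer h⁻¹ g
        rw [inv_inv] at e2
        rw [← e2, hCg, conjSub_conjSub, inv_mul_cancel, conjSub_one]
      exact ⟨h⁻¹ * g * h, h, Or.inl (by rw [e1]; exact hHcan), by rw [e1]; exact hCg⟩
    · exact ⟨g, 1, Or.inr ⟨g₀, hzp⟩, (conjSub_one _).symm⟩
  refine ⟨X, W,
    (fun w => if IsCanonical X (Subgroup.centralizer ({w} : Set G)) then ⊥
      else Subgroup.centralizer ({w} : Set G)),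
    (fun w => if IsCanonical X (Subgroup.centralizer ({w} : Set G))
      then Subgroup.centralizer ({w} : Set G) else ⊥),
    hgen, hC1, hC2, ?_, hC4a, hC4b, ?_, ?_, ?_, ?_, ?_, ?_, ?_, ?_⟩
  · -- unique roots
    intro g h n hn hgh
    have key : ∀ x y : G, Commute x y → x ^ n = y ^ n → x = y := by
      intro x y hc he
      have h1 : (x * y⁻¹) ^ n = 1 := by
        rw [hc.inv_right.mul_pow, inv_pow, he, mul_inv_cancel]
      by_contra hxy
      have hne : x * y⁻¹ ≠ 1 := fun e => hxy (mul_inv_eq_one.1 e)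
      exact hC1 _ hne (isOfFinOrder_iff_pow_eq_one.2 ⟨n, Nat.pos_of_ne_zero hn, h1⟩)
    by_cases hg1 : g ^ n = 1
    · have hgg : g = 1 := by
        by_contra hg
        exact hC1 g hg (isOfFinOrder_iff_pow_eq_one.2 ⟨n, Nat.pos_of_ne_zero hn, hg1⟩)
      have hh1 : h ^ n = 1 := by rw [← hgh]; exact hg1
      have hhh : h = 1 := by
        by_contra hh
        exact hC1 h hh (isOfFinOrder_iff_pow_eq_one.2 ⟨n, Nat.pos_of_ne_zero hn, hh1⟩)
      rw [hgg, hhh]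
    · have hc1 : Commute (g ^ n) g := (Commute.refl g).pow_left n
      have hc2 : Commute (g ^ n) h := by rw [hgh]; exact (Commute.refl h).pow_left n
      exact key g h (comm_trans hCSA hg1 hc1 hc2) hgh
  · -- c6a
    intro g
    obtain ⟨w, h, hwW, hCg⟩ := cover g
    exact ⟨0, fun _ => w, h, fun _ => hwW, fun _ => hCg, fun _ => rfl⟩
  · -- c6b
    intro w hw
    by_cases hcan : IsCanonical X (Subgroup.centralizer ({w} : Set G))
    · simp only [if_pos hcan]
      refine ⟨fun h hh k hk => ?_, by simp, by simp⟩
      have h1 : h = 1 := Subgroup.mem_bot.1 hh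
      rw [h1]
      exact Commute.one_left k
    · simp only [if_neg hcan]
      refine ⟨fun h hh k hk => ?_, by simp, by simp⟩
      have k1 : k = 1 := Subgroup.mem_bot.1 hk
      rw [k1]
      exact Commute.one_right h
  · -- c6bi
    intro w hw hab hcan
    exact ⟨by simp only [if_pos hcan], by simp only [if_pos hcan]⟩
  · -- c6bii
    intro w hw hab hcan
    simp only [if_neg hcan]
    refine ⟨?_, hcan, ?_⟩
    · rcases hw with hc | hzp
      · exact absurd hc hcan
      · exact hzp
    · refine ⟨∅, Set.empty_subset X, Subgroup.closure_empty.symm, ?_, ?_⟩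
      · intro Y hY o ho
        exact absurd ho (Set.notMem_empty o)
      · intro K' hK'X hOP
        rw [Subgroup.closure_le]
        intro o hoK'
        simp only [SetLike.mem_coe, Subgroup.mem_bot]
        by_contra ho1
        obtain ⟨Y, hYmin⟩ := exists_minimalWith hfin
          (p := fun Y => Subgroup.centralizer ({w} : Set G) ≤ Subgroup.closure Y)
          ⟨X, subset_rfl, show Subgroup.centralizer ({w} : Set G) ≤ Subgroup.closure X by
            rw [hgen]; exact le_top⟩
        have hoYcomm := hOP Y hYmin o hoK'
        have hYle : Subgroup.closure Y ≤ Subgroup.centralizer ({o} : Set G) := by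
          rw [Subgroup.closure_le]
          intro y hy
          exact mem_cent_single.2 (hoYcomm.1 y hy).symm
        have hwY : w ∈ Subgroup.closure Y := hYmin.2.1 (self_mem_cent w)
        have how : Commute o w := (mem_cent_single.1 (hYle hwY)).symm
        have hYsub : Y ⊆ ↑(Subgroup.centralizer ({w} : Set G)) := by
          intro y hy
          rcases eq_or_ne y 1 with rfl | hy1
          · simp only [SetLike.mem_coe]
            exact Subgroup.one_mem _
          · have hoy : Commute o y := hoYcomm.1 y hy
            have hyw : Commute y w := comm_trans hCSA ho1 hoy how
            simp only [SetLike.mem_coe]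
            exact mem_cent_single.2 hyw
        have heq : Subgroup.centralizer ({w} : Set G) = Subgroup.closure Y :=
          le_antisymm hYmin.2.1 ((Subgroup.closure_le _).2 hYsub)
        exact hcan ⟨Y, hYmin.1, heq⟩
  · -- c6biii
    intro w hw hnab
    have hw1 : w = 1 := hone w hnab
    subst hw1
    have hcan : IsCanonical X (Subgroup.centralizer ({(1 : G)} : Set G)) := by
      rw [hcent1]; exact hcan_top
    simp only [if_pos hcan]
    refine ⟨X, subset_rfl, by rw [hcent1]; exact hgen.symm, ?_, ?_⟩
    · intro Y hYmin o hoX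
      have hY : ∅ = Y := hYmin.2.2 ∅ (Set.empty_subset Y) (Subgroup.one_mem _)
      subst hY
      exact ⟨fun y hy => absurd hy (Set.notMem_empty y), Set.notMem_empty o⟩
    · intro K' hK' hOP
      rw [hcent1]
      exact le_top
  · -- c6c
    intro w hw g hg hnc
    by_cases hcan : IsCanonical X (Subgroup.centralizer ({w} : Set G))
    · simp only [if_pos hcan] at hg ⊢
      by_cases hw1 : w = 1
      · obtain ⟨w₀, h, hw₀W, hCg⟩ := cover g
        subst hw1
        rw [hcent1]
        exact ⟨w₀, h, hw₀W, trivial, trivial, hCg⟩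
      · rcases eq_or_ne g 1 with rfl | hg1
        · exact ⟨1, 1, h1W, Subgroup.one_mem _, Subgroup.one_mem _, (conjSub_one _).symm⟩
        · exfalso
          have hgw : Commute g w := mem_cent_single.1 hg
          have hCeq := cent_eq_of_commute hCSA hw1 hg1 hgw
          exact hnc ⟨1, by rw [conjSub_one]; exact hCeq⟩
    · simp only [if_neg hcan] at hg ⊢
      have hg1 : g = 1 := Subgroup.mem_bot.1 hg
      subst hg1
      exact ⟨1, 1, h1W, Subgroup.one_mem _, Subgroup.one_mem _, (conjSub_one _).symm⟩
  · -- c7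
    intro w hw hab a h ha hconj hh
    have hmal := hCSA _ hab (cent_maximal hab) h⁻¹
      (fun hmem => hh ((Subgroup.centralizer _).inv_mem_iff.1 hmem))
    have hx : h⁻¹ * a * h ∈
        conjSub h⁻¹ (Subgroup.centralizer ({w} : Set G)) ⊓
          Subgroup.centralizer ({w} : Set G) := by
      refine ⟨mem_conjSub.2 ?_, hconj⟩
      have e : h⁻¹⁻¹ * (h⁻¹ * a * h) * h⁻¹ = a := by group
      rw [e]
      exact ha
    rw [hmal] at hx
    have ha1 : h⁻¹ * a * h = 1 := Subgroup.mem_bot.1 hx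
    have haa : a = 1 := by
      have e := congrArg (fun t => h * t * h⁻¹) ha1
      simpa [mul_assoc] using e
    subst haa
    exact ⟨Subgroup.one_mem _, Commute.one_right h⟩
  · -- c8
    intro w hw hnab
    have hw1 : w = 1 := hone w hnab
    subst hw1
    have hcan : IsCanonical X (Subgroup.centralizer ({(1 : G)} : Set G)) := by
      rw [hcent1]; exact hcan_top
    refine ⟨hcan, ⟨∅, ⟨Set.empty_subset X, Subgroup.one_mem _,
      fun Y' hY' _ => Set.subset_empty_iff.1 hY'⟩,
      by simp only [if_pos hcan]; exact Subgroup.closure_empty.symm⟩, ?_⟩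
    have hsc : subCenter (Subgroup.centralizer ({(1 : G)} : Set G)) = ⊥ := by
      rw [hcent1, eq_bot_iff]
      intro z hz
      simp only [Subgroup.mem_bot]
      by_contra hz1
      have hz2 : z ∈ Subgroup.centralizer ((⊤ : Subgroup G) : Set G) :=
        (Subgroup.mem_inf.1 hz).2
      have hall : ∀ x : G, Commute z x := fun x =>
        (Subgroup.mem_centralizer_iff.1 hz2 x (by simp)).symm
      have habz := habel z hz1
      exact hna fun a b =>
        habz a (mem_cent_single.2 (hall a).symm) b (mem_cent_single.2 (hall b).symm)
    rw [hsc]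
    exact hcan_bot


end PaperBase
end
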